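/- Let d ∈ ℕ, b > 0, and let f : ℝ^d × ℝ^d → ℝ be nonnegative and measurable with spatial density ρ(x) = ∫_{ℝ^d} f(x,v) dv. Then there is a constant C depending only on b and d such that ‖ρ‖_{L^{(b+d)/d}(ℝ^d)} ≤ C ‖f‖_{L^∞(ℝ^{2d})}^{b/(d+b)} (∫_{ℝ^d × ℝ^d} |v|^b f(x,v) dx dv)^{d/(b+d)}. -/

import Mathlib

open MeasureTheory Metric ENNReal

private lemma opt_eq {b D a m : ℝ} (hb : 0 < b) (hD : 0 < D) (ha : 0 < a) (hm : 0 < m) :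
    a * ((m / a) ^ (1 / (b + D))) ^ D + ((m / a) ^ (1 / (b + D))) ^ (-b) * m
      = 2 * a ^ (b / (b + D)) * m ^ (D / (b + D)) := by
  have hbD : 0 < b + D := by linarith
  have hr : 0 < m / a := div_pos hm ha
  rw [← Real.rpow_mul hr.le, ← Real.rpow_mul hr.le]
  have e1 : 1 / (b + D) * D = D / (b + D) := by field_simp
  have e2 : 1 / (b + D) * -b = -(b / (b + D)) := by field_simp
  rw [e1, e2, Real.div_rpow hm.le ha.le, Real.rpow_neg hr.le, Real.div_rpow hm.le ha.le]
  have hap : ∀ p : ℝ, 0 < a ^ p := fun p => Real.rpow_pos_of_pos ha p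
  have hmp : ∀ p : ℝ, 0 < m ^ p := fun p => Real.rpow_pos_of_pos hm p
  have key1 : a = a ^ (b / (b + D)) * a ^ (D / (b + D)) := by
    rw [← Real.rpow_add ha, ← add_div, div_self hbD.ne']; exact (Real.rpow_one a).symm
  have key2 : m = m ^ (b / (b + D)) * m ^ (D / (b + D)) := by
    rw [← Real.rpow_add hm, ← add_div, div_self hbD.ne']; exact (Real.rpow_one m).symm
  field_simp
  nlinarith [key1, key2, hap (b/(b+D)), hmp (D/(b+D)), hap (D/(b+D)), hmp (b/(b+D))]

/-- Density interpolation: for `b > 0` there is `C = C(b,d)` such that for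
every nonnegative measurable `f` on phase space, the spatial density `ρ(x) = ∫ f(x,v) dv`
satisfies `‖ρ‖_{L^{(b+d)/d}} ≤ C ‖f‖_∞^{b/(d+b)} (∫∫ |v|^b f dx dv)^{d/(b+d)}`. -/
theorem density_moment_interpolation (d : ℕ) (hd : 0 < d) (b : ℝ) (hb : 0 < b) :
    ∃ C : ℝ, 0 < C ∧
      ∀ f : EuclideanSpace ℝ (Fin d) × EuclideanSpace ℝ (Fin d) → ℝ,
        Measurable f → (∀ z, 0 ≤ f z) →
        (∫⁻ x : EuclideanSpace ℝ (Fin d),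
            (∫⁻ v, ENNReal.ofReal (f (x, v))) ^ ((b + d) / (d : ℝ))) ^ ((d : ℝ) / (b + d)) ≤
          ENNReal.ofReal C * (eLpNorm f ⊤ volume) ^ (b / ((d : ℝ) + b)) *
            (∫⁻ z : EuclideanSpace ℝ (Fin d) × EuclideanSpace ℝ (Fin d),
              ENNReal.ofReal (‖z.2‖ ^ b * f z)) ^ ((d : ℝ) / (b + d)) := by
  have hd' : (0:ℝ) < d := Nat.cast_pos.mpr hd
  have hbd : (0:ℝ) < b + d := by linarith
  haveI : Nonempty (Fin d) := ⟨⟨0, hd⟩⟩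
  set E := EuclideanSpace ℝ (Fin d) with hE
  set V : ℝ≥0∞ := volume (Metric.ball (0 : E) 1) with hVdef
  have hV0 : V ≠ 0 := (Metric.measure_ball_pos volume 0 one_pos).ne'
  have hVtop : V ≠ ⊤ := measure_ball_lt_top.ne
  have hVt : 0 < V.toReal := ENNReal.toReal_pos hV0 hVtop
  set P : ℝ := (b + d) / d with hP
  have hPpos : 0 < P := div_pos hbd hd'
  refine ⟨2 * V.toReal ^ (b / (b + d)), by positivity, ?_⟩
  intro f hf hf0
  set M := eLpNorm f ⊤ volume with hM
  set μf : E → ℝ≥0∞ := fun x => ∫⁻ v, ENNReal.ofReal (‖v‖ ^ b * f (x, v)) with hμf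
  have hrpowmeas : Measurable fun z : E × E => ‖z.2‖ ^ b :=
    (Real.continuous_rpow_const hb.le).measurable.comp measurable_snd.norm
  have hμmeas : Measurable μf := by
    apply Measurable.lintegral_prod_right
    exact ENNReal.measurable_ofReal.comp (hrpowmeas.mul hf)
  -- a.e. essential sup bound
  have haeM : ∀ᵐ x : E, ∀ᵐ v : E, ENNReal.ofReal (f (x, v)) ≤ M := by
    have h1 : ∀ᵐ z : E × E, ENNReal.ofReal (f z) ≤ M := by
      have h2 := ae_le_eLpNormEssSup (f := f) (μ := (volume : Measure (E × E)))
      rw [hM, eLpNorm_exponent_top]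
      filter_upwards [h2] with z hz
      calc ENNReal.ofReal (f z) = ‖f z‖ₑ := (Real.enorm_eq_ofReal (hf0 z)).symm
        _ ≤ _ := hz
    rw [MeasureTheory.Measure.volume_eq_prod _ _] at h1
    exact Measure.ae_ae_of_ae_prod h1
  -- the key pointwise estimate
  have hptwise : ∀ᵐ x : E, (∫⁻ v, ENNReal.ofReal (f (x, v))) ^ P ≤
      ENNReal.ofReal (2 ^ P) * (V * M) ^ (b / (d:ℝ)) * μf x := by
    filter_upwards [haeM] with x hx
    -- trivial case M = 0
    by_cases hM0 : M = 0
    · have hρ0 : (∫⁻ v, ENNReal.ofReal (f (x, v))) = 0 := by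
        have h : ∀ᵐ v : E, ENNReal.ofReal (f (x, v)) = 0 := by
          filter_upwards [hx] with v hv
          simpa [hM0, le_zero_iff] using hv
        rw [lintegral_congr_ae h, lintegral_zero]
      rw [hρ0, ENNReal.zero_rpow_of_pos hPpos]
      exact zero_le
    -- trivial case μf x = 0
    by_cases hμ0 : μf x = 0
    · have hρ0 : (∫⁻ v, ENNReal.ofReal (f (x, v))) = 0 := by
        have hmeasv : Measurable fun v : E => ENNReal.ofReal (‖v‖ ^ b * f (x, v)) :=
          ENNReal.measurable_ofReal.comp
            (((Real.continuous_rpow_const hb.le).measurable.comp measurable_norm).mul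
              (hf.comp measurable_prodMk_left))
        have h0 := (lintegral_eq_zero_iff hmeasv).mp hμ0
        have hne : ∀ᵐ v : E, v ≠ 0 := by
          rw [ae_iff]
          simpa using measure_singleton (0 : E)
        have h : ∀ᵐ v : E, ENNReal.ofReal (f (x, v)) = 0 := by
          filter_upwards [h0, hne] with v hv hv0
          simp only [Pi.zero_apply, ENNReal.ofReal_eq_zero] at hv ⊢
          have hnv : 0 < ‖v‖ ^ b := Real.rpow_pos_of_pos (norm_pos_iff.mpr hv0) b
          nlinarith [hf0 (x, v)]
        rw [lintegral_congr_ae h, lintegral_zero]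
      rw [hρ0, ENNReal.zero_rpow_of_pos hPpos]
      exact zero_le
    -- the bound for each radius R
    have hbound : ∀ R : ℝ, 0 < R →
        (∫⁻ v, ENNReal.ofReal (f (x, v))) ≤
          (V * M) * ENNReal.ofReal (R ^ (d:ℝ)) + ENNReal.ofReal (R ^ (-b)) * μf x := by
      intro R hR
      have hsplit : (∫⁻ v, ENNReal.ofReal (f (x, v))) =
          (∫⁻ v in ball (0:E) R, ENNReal.ofReal (f (x, v))) +
            ∫⁻ v in (ball (0:E) R)ᶜ, ENNReal.ofReal (f (x, v)) :=
        (lintegral_add_compl _ measurableSet_ball).symm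
      rw [hsplit]
      refine add_le_add ?_ ?_
      · calc (∫⁻ v in ball (0:E) R, ENNReal.ofReal (f (x, v)))
            ≤ ∫⁻ _ in ball (0:E) R, M := lintegral_mono_ae (ae_restrict_of_ae hx)
          _ = M * volume (ball (0:E) R) := by rw [setLIntegral_const]
          _ = (V * M) * ENNReal.ofReal (R ^ (d:ℝ)) := by
              rw [Measure.addHaar_ball volume (0:E) hR.le]
              have hfr : R ^ (Module.finrank ℝ E) = R ^ (d:ℝ) := by
                rw [show Module.finrank ℝ E = d from finrank_euclideanSpace_fin]
                exact (Real.rpow_natCast R d).symm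
              rw [hfr]; ring
      · calc (∫⁻ v in (ball (0:E) R)ᶜ, ENNReal.ofReal (f (x, v)))
            ≤ ∫⁻ v in (ball (0:E) R)ᶜ,
                ENNReal.ofReal (R ^ (-b)) * ENNReal.ofReal (‖v‖ ^ b * f (x, v)) := by
              refine lintegral_mono_ae ?_
              filter_upwards [ae_restrict_mem measurableSet_ball.compl] with v hv
              have hRv : R ≤ ‖v‖ := by
                have := hv
                simp only [Set.mem_compl_iff, Metric.mem_ball, dist_zero_right, not_lt] at this
                exact this
              have hRb : R ^ b ≤ ‖v‖ ^ b := Real.rpow_le_rpow hR.le hRv hb.le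
              have hkey : f (x, v) ≤ R ^ (-b) * (‖v‖ ^ b * f (x, v)) := by
                have hRbpos : 0 < R ^ b := Real.rpow_pos_of_pos hR b
                rw [Real.rpow_neg hR.le]
                have h1 : 1 ≤ (R ^ b)⁻¹ * ‖v‖ ^ b := by
                  rw [← div_eq_inv_mul, le_div_iff₀ hRbpos, one_mul]; exact hRb
                have h2 := mul_le_mul_of_nonneg_right h1 (hf0 (x, v))
                rw [one_mul] at h2
                calc f (x, v) ≤ (R ^ b)⁻¹ * ‖v‖ ^ b * f (x, v) := h2
                  _ = (R ^ b)⁻¹ * (‖v‖ ^ b * f (x, v)) := by ring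
              calc ENNReal.ofReal (f (x, v)) ≤
                  ENNReal.ofReal (R ^ (-b) * (‖v‖ ^ b * f (x, v))) :=
                    ENNReal.ofReal_le_ofReal hkey
                _ = _ := ENNReal.ofReal_mul (Real.rpow_nonneg hR.le _)
          _ = ENNReal.ofReal (R ^ (-b)) *
                ∫⁻ v in (ball (0:E) R)ᶜ, ENNReal.ofReal (‖v‖ ^ b * f (x, v)) :=
              lintegral_const_mul' _ _ ENNReal.ofReal_ne_top
          _ ≤ ENNReal.ofReal (R ^ (-b)) * μf x := by
              refine mul_le_mul_right ?_ _
              exact setLIntegral_le_lintegral _ _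
    -- remaining nontrivial cases
    by_cases hMtop : M = ⊤
    · have : (V * M) ^ (b / (d:ℝ)) = ⊤ := by
        rw [ENNReal.rpow_eq_top_iff]
        right
        constructor
        · rw [hMtop]; exact ENNReal.mul_top hV0
        · positivity
      rw [this]
      rw [ENNReal.mul_top (by simp [ENNReal.ofReal_eq_zero]; positivity)]
      rw [ENNReal.top_mul hμ0]
      exact le_top
    by_cases hμtop : μf x = ⊤
    · rw [hμtop, ENNReal.mul_top]
      · exact le_top
      · refine mul_ne_zero ?_ ?_
        · simp only [ne_eq, ENNReal.ofReal_eq_zero, not_le]; positivity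
        · refine (ENNReal.rpow_pos ?_ ?_).ne'
          · exact lt_of_le_of_ne zero_le (mul_ne_zero hV0 hM0).symm
          · exact ENNReal.mul_ne_top hVtop hMtop
    -- main case
    have hVMtop : V * M ≠ ⊤ := ENNReal.mul_ne_top hVtop hMtop
    have hVM0 : V * M ≠ 0 := mul_ne_zero hV0 hM0
    set a : ℝ := (V * M).toReal with ha
    set m : ℝ := (μf x).toReal with hm
    have hapos : 0 < a := ENNReal.toReal_pos hVM0 hVMtop
    have hmpos : 0 < m := ENNReal.toReal_pos hμ0 hμtop
    set R : ℝ := (m / a) ^ (1 / (b + (d:ℝ))) with hR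
    have hRpos : 0 < R := Real.rpow_pos_of_pos (div_pos hmpos hapos) _
    have h1 := hbound R hRpos
    have h2 : (V * M) * ENNReal.ofReal (R ^ (d:ℝ)) + ENNReal.ofReal (R ^ (-b)) * μf x
        = ENNReal.ofReal (2 * a ^ (b / (b + d)) * m ^ ((d:ℝ) / (b + d))) := by
      rw [show V * M = ENNReal.ofReal a from (ENNReal.ofReal_toReal hVMtop).symm,
        show μf x = ENNReal.ofReal m from (ENNReal.ofReal_toReal hμtop).symm,
        ← ENNReal.ofReal_mul hapos.le, ← ENNReal.ofReal_mul (Real.rpow_nonneg hRpos.le _),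
        ← ENNReal.ofReal_add (by positivity) (by positivity)]
      congr 1
      exact opt_eq hb hd' hapos hmpos
    rw [h2] at h1
    -- raise to power P
    have h3 := ENNReal.rpow_le_rpow h1 hPpos.le
    refine h3.trans_eq ?_
    have h4 : (2 * a ^ (b / (b + d)) * m ^ ((d:ℝ) / (b + d))) ^ P
        = 2 ^ P * a ^ (b / (d:ℝ)) * m := by
      rw [Real.mul_rpow (by positivity) (by positivity),
        Real.mul_rpow (by positivity) (by positivity),
        ← Real.rpow_mul hapos.le, ← Real.rpow_mul hmpos.le]
      rw [show b / (b + d) * P = b / (d:ℝ) by field_simp [hP]; rw [hP]; field_simp,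
        show (d:ℝ) / (b + d) * P = 1 by field_simp [hP]; rw [hP]; field_simp,
        Real.rpow_one]
    rw [ENNReal.ofReal_rpow_of_pos (by positivity), h4,
      ENNReal.ofReal_mul (by positivity), ENNReal.ofReal_mul (by positivity)]
    congr 1
    · congr 1
      rw [← ENNReal.ofReal_rpow_of_pos hapos, ENNReal.ofReal_toReal hVMtop]
    · exact ENNReal.ofReal_toReal hμtop
  -- integrate
  have hint : (∫⁻ x : E, (∫⁻ v, ENNReal.ofReal (f (x, v))) ^ P) ≤
      ENNReal.ofReal (2 ^ P) * (V * M) ^ (b / (d:ℝ)) *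
        (∫⁻ z : E × E, ENNReal.ofReal (‖z.2‖ ^ b * f z)) := by
    have hT : (∫⁻ z : E × E, ENNReal.ofReal (‖z.2‖ ^ b * f z)) = ∫⁻ x, μf x := by
      rw [MeasureTheory.Measure.volume_eq_prod _ _]
      exact lintegral_prod _ (ENNReal.measurable_ofReal.comp (hrpowmeas.mul hf)).aemeasurable
    calc (∫⁻ x : E, (∫⁻ v, ENNReal.ofReal (f (x, v))) ^ P)
        ≤ ∫⁻ x, ENNReal.ofReal (2 ^ P) * (V * M) ^ (b / (d:ℝ)) * μf x :=
          lintegral_mono_ae hptwise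
      _ = ENNReal.ofReal (2 ^ P) * (V * M) ^ (b / (d:ℝ)) * ∫⁻ x, μf x :=
          lintegral_const_mul _ hμmeas
      _ = _ := by rw [hT]
  -- take power d/(b+d)
  have hp' : (0:ℝ) ≤ (d:ℝ) / (b + d) := by positivity
  have h5 := ENNReal.rpow_le_rpow hint hp'
  refine h5.trans_eq ?_
  set I := ∫⁻ z : E × E, ENNReal.ofReal (‖z.2‖ ^ b * f z) with hI
  rw [ENNReal.mul_rpow_of_nonneg _ _ hp', ENNReal.mul_rpow_of_nonneg _ _ hp']
  rw [← ENNReal.rpow_mul (V * M)]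
  rw [show b / (d:ℝ) * ((d:ℝ) / (b + d)) = b / (b + d) by field_simp]
  rw [ENNReal.mul_rpow_of_nonneg V M (by positivity)]
  have e1 : ENNReal.ofReal (2 ^ P) ^ ((d:ℝ) / (b + d)) = ENNReal.ofReal 2 := by
    rw [ENNReal.ofReal_rpow_of_pos (by positivity),
      ← Real.rpow_mul (by norm_num : (0:ℝ) ≤ 2),
      show P * ((d:ℝ) / (b + d)) = 1 by field_simp [hP]; rw [hP]; field_simp, Real.rpow_one]
  have e2 : ENNReal.ofReal (V.toReal ^ (b / (b + (d:ℝ)))) = V ^ (b / (b + (d:ℝ))) := by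
    rw [← ENNReal.ofReal_rpow_of_pos hVt, ENNReal.ofReal_toReal hVtop]
  rw [e1, ← e2, ENNReal.ofReal_mul (by norm_num : (0:ℝ) ≤ 2),
    show b / ((d:ℝ) + b) = b / (b + (d:ℝ)) by rw [add_comm]]
  ring
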